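/- Let Q be a finite-dimensional real vector space, H : [0,T] × Q × Q* → ℝ a C¹ Hamiltonian, and (q,p) : [0,T] → Q × Q* a C¹ curve with q(0) = q₀ and p(T) = p₁. Then the Type II action S_II[q,p] = ⟨p(T), q(T)⟩ − ∫₀ᵀ (⟨p(t), q̇(t)⟩ − H(t,q(t),p(t))) dt is stationary with respect to all C¹ variations (δq, δp) satisfying δq(0) = 0 and δp(T) = 0 if and only if q̇(t) = D_p H(t,q(t),p(t)) and ṗ(t) = −D_q H(t,q(t),p(t)) for all t ∈ (0,T). -/

import Mathlib

open MeasureTheory intervalIntegral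


open Set

/-- The Type II action
`S_II[q,p] = ⟨p(T), q(T)⟩ − ∫₀ᵀ (⟨p(t), q̇(t)⟩ − H(t,q(t),p(t))) dt`. -/
noncomputable def typeIIAction (n : ℕ) (T : ℝ)
    (H : ℝ → (Fin n → ℝ) → (Fin n → ℝ) → ℝ) (q p : ℝ → (Fin n → ℝ)) : ℝ :=
  (∑ i, p T i * q T i)
    - ∫ t in (0 : ℝ)..T, ((∑ i, p t i * deriv q t i) - H t (q t) (p t))

lemma clm_apply_eq_sum (n : ℕ) (L : (Fin n → ℝ) →L[ℝ] ℝ) (x : Fin n → ℝ) :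
    L x = ∑ i, x i * L (Pi.single i 1) := by
  have h := (L : (Fin n → ℝ) →ₗ[ℝ] ℝ).pi_apply_eq_sum_univ x
  simp only [ContinuousLinearMap.coe_coe] at h
  rw [h]
  refine Finset.sum_congr rfl fun i _ => ?_
  rw [smul_eq_mul]
  congr 2
  funext j
  simp [Pi.single_apply, eq_comm]

lemma partial_p_eq (n : ℕ) (H : ℝ → (Fin n → ℝ) → (Fin n → ℝ) → ℝ)
    (hH : ContDiff ℝ 1 (fun x : ℝ × (Fin n → ℝ) × (Fin n → ℝ) => H x.1 x.2.1 x.2.2))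
    (t : ℝ) (a v w : Fin n → ℝ) :
    fderiv ℝ (fun p' => H t a p') v w
      = fderiv ℝ (fun x : ℝ × (Fin n → ℝ) × (Fin n → ℝ) => H x.1 x.2.1 x.2.2) (t, a, v)
          ((0 : ℝ), (0 : Fin n → ℝ), w) := by
  have hD : HasFDerivAt (fun x : ℝ × (Fin n → ℝ) × (Fin n → ℝ) => H x.1 x.2.1 x.2.2)
      (fderiv ℝ (fun x : ℝ × (Fin n → ℝ) × (Fin n → ℝ) => H x.1 x.2.1 x.2.2) (t, a, v))
      (t, a, v) := (hH.differentiable one_ne_zero (t, a, v)).hasFDerivAt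
  have hc : HasFDerivAt (fun p' : Fin n → ℝ => ((t, a, p') : ℝ × (Fin n → ℝ) × (Fin n → ℝ)))
      (((0 : (Fin n → ℝ) →L[ℝ] ℝ)).prod
        (((0 : (Fin n → ℝ) →L[ℝ] (Fin n → ℝ))).prod (ContinuousLinearMap.id ℝ _))) v :=
    HasFDerivAt.prodMk (hasFDerivAt_const t v) (HasFDerivAt.prodMk (hasFDerivAt_const a v) (hasFDerivAt_id v))
  have h2 : HasFDerivAt (fun p' => H t a p')
      ((fderiv ℝ (fun x : ℝ × (Fin n → ℝ) × (Fin n → ℝ) => H x.1 x.2.1 x.2.2) (t, a, v)).comp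
        (((0 : (Fin n → ℝ) →L[ℝ] ℝ)).prod
          (((0 : (Fin n → ℝ) →L[ℝ] (Fin n → ℝ))).prod (ContinuousLinearMap.id ℝ _)))) v :=
    by have := hD.comp v hc; exact this
  rw [h2.fderiv]
  simp

lemma partial_q_eq (n : ℕ) (H : ℝ → (Fin n → ℝ) → (Fin n → ℝ) → ℝ)
    (hH : ContDiff ℝ 1 (fun x : ℝ × (Fin n → ℝ) × (Fin n → ℝ) => H x.1 x.2.1 x.2.2))
    (t : ℝ) (a v w : Fin n → ℝ) :
    fderiv ℝ (fun q' => H t q' v) a w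
      = fderiv ℝ (fun x : ℝ × (Fin n → ℝ) × (Fin n → ℝ) => H x.1 x.2.1 x.2.2) (t, a, v)
          ((0 : ℝ), w, (0 : Fin n → ℝ)) := by
  have hD : HasFDerivAt (fun x : ℝ × (Fin n → ℝ) × (Fin n → ℝ) => H x.1 x.2.1 x.2.2)
      (fderiv ℝ (fun x : ℝ × (Fin n → ℝ) × (Fin n → ℝ) => H x.1 x.2.1 x.2.2) (t, a, v))
      (t, a, v) := (hH.differentiable one_ne_zero (t, a, v)).hasFDerivAt
  have hc : HasFDerivAt (fun q' : Fin n → ℝ => ((t, q', v) : ℝ × (Fin n → ℝ) × (Fin n → ℝ)))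
      (((0 : (Fin n → ℝ) →L[ℝ] ℝ)).prod
        ((ContinuousLinearMap.id ℝ _).prod ((0 : (Fin n → ℝ) →L[ℝ] (Fin n → ℝ))))) a :=
    HasFDerivAt.prodMk (hasFDerivAt_const t a) (HasFDerivAt.prodMk (hasFDerivAt_id a) (hasFDerivAt_const v a))
  have h2 : HasFDerivAt (fun q' => H t q' v)
      ((fderiv ℝ (fun x : ℝ × (Fin n → ℝ) × (Fin n → ℝ) => H x.1 x.2.1 x.2.2) (t, a, v)).comp
        (((0 : (Fin n → ℝ) →L[ℝ] ℝ)).prod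
          ((ContinuousLinearMap.id ℝ _).prod ((0 : (Fin n → ℝ) →L[ℝ] (Fin n → ℝ)))))) a :=
    by have := hD.comp a hc; exact this
  rw [h2.fderiv]
  simp

lemma key_deriv (n : ℕ) (T : ℝ) (hT : 0 < T)
    (H : ℝ → (Fin n → ℝ) → (Fin n → ℝ) → ℝ)
    (hH : ContDiff ℝ 1 (fun x : ℝ × (Fin n → ℝ) × (Fin n → ℝ) => H x.1 x.2.1 x.2.2))
    (q p : ℝ → (Fin n → ℝ)) (hq : ContDiff ℝ 1 q) (hp : ContDiff ℝ 1 p)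
    (δq δp : ℝ → (Fin n → ℝ)) (hδq : ContDiff ℝ 1 δq) (hδp : ContDiff ℝ 1 δp)
    (hδq0 : δq 0 = 0) (hδpT : δp T = 0) :
    deriv (fun ε : ℝ =>
        typeIIAction n T H (fun t => q t + ε • δq t) (fun t => p t + ε • δp t)) 0
      = ∫ t in (0:ℝ)..T,
          ((∑ i, δq t i *
              (fderiv ℝ (fun q' => H t q' (p t)) (q t) (Pi.single i 1) + deriv p t i))
            + ∑ i, δp t i *
              (fderiv ℝ (fun p' => H t (q t) p') (p t) (Pi.single i 1) - deriv q t i)) := by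
  classical
  have dH : Differentiable ℝ (fun x : ℝ × (Fin n → ℝ) × (Fin n → ℝ) => H x.1 x.2.1 x.2.2) :=
    hH.differentiable one_ne_zero
  have cDH : Continuous (fderiv ℝ (fun x : ℝ × (Fin n → ℝ) × (Fin n → ℝ) => H x.1 x.2.1 x.2.2)) :=
    hH.continuous_fderiv one_ne_zero
  have dq := hq.differentiable one_ne_zero
  have dp := hp.differentiable one_ne_zero
  have dδq := hδq.differentiable one_ne_zero
  have dδp := hδp.differentiable one_ne_zero
  have cq := hq.continuous
  have cp := hp.continuous
  have cδq := hδq.continuous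
  have cδp := hδp.continuous
  have cq' := hq.continuous_deriv le_rfl
  have cp' := hp.continuous_deriv le_rfl
  have cδq' := hδq.continuous_deriv le_rfl
  have cδp' := hδp.continuous_deriv le_rfl
  set Φ : ℝ → ℝ → ℝ := fun x t =>
    (∑ i, (p t i + x * δp t i) * (deriv q t i + x * deriv δq t i))
      - H t (q t + x • δq t) (p t + x • δp t) with hΦdef
  set Φ' : ℝ → ℝ → ℝ := fun x t =>
    (∑ i, (δp t i * (deriv q t i + x * deriv δq t i) + (p t i + x * δp t i) * deriv δq t i))
      - (fderiv ℝ (fun z : ℝ × (Fin n → ℝ) × (Fin n → ℝ) => H z.1 z.2.1 z.2.2)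
          (t, q t + x • δq t, p t + x • δp t)) ((0:ℝ), δq t, δp t) with hΦ'def
  -- differentiability in the parameter
  have hΦd : ∀ x t : ℝ, HasDerivAt (fun y => Φ y t) (Φ' x t) x := by
    intro x t
    have hsum : HasDerivAt
        (fun y => ∑ i, (p t i + y * δp t i) * (deriv q t i + y * deriv δq t i))
        (∑ i, (δp t i * (deriv q t i + x * deriv δq t i)
          + (p t i + x * δp t i) * deriv δq t i)) x :=
      HasDerivAt.fun_sum fun i _ =>
        ((hasDerivAt_mul_const (δp t i)).const_add (p t i)).mul
          ((hasDerivAt_mul_const (deriv δq t i)).const_add (deriv q t i))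
    have hcurve : HasDerivAt (fun y : ℝ =>
        ((t, q t + y • δq t, p t + y • δp t) : ℝ × (Fin n → ℝ) × (Fin n → ℝ)))
        ((0:ℝ), δq t, δp t) x := by
      refine (hasDerivAt_const x t).prodMk (HasDerivAt.prodMk ?_ ?_)
      · simpa using ((hasDerivAt_id x).smul_const (δq t)).const_add (q t)
      · simpa using ((hasDerivAt_id x).smul_const (δp t)).const_add (p t)
    exact hsum.sub ((dH _).hasFDerivAt.comp_hasDerivAt x hcurve)
  -- continuity facts
  have cΦ : Continuous fun z : ℝ × ℝ => Φ z.1 z.2 := by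
    simp only [hΦdef]; fun_prop
  have cΦ' : Continuous fun z : ℝ × ℝ => Φ' z.1 z.2 := by
    simp only [hΦ'def]; fun_prop
  -- uniform bound on [-1,1] × [0,T]
  obtain ⟨C, hC⟩ : ∃ C, ∀ z ∈ Icc (-1:ℝ) 1 ×ˢ Icc (0:ℝ) T, ‖Φ' z.1 z.2‖ ≤ C :=
    (isCompact_Icc.prod isCompact_Icc).exists_bound_of_continuousOn cΦ'.continuousOn
  -- derivative under the integral sign
  have main := intervalIntegral.hasDerivAt_integral_of_dominated_loc_of_deriv_le
    (μ := volume) (F := Φ) (F' := Φ') (x₀ := (0:ℝ)) (bound := fun _ => C)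
    (a := 0) (b := T) (s := Metric.ball 0 1) (Metric.ball_mem_nhds 0 one_pos)
    (Filter.Eventually.of_forall fun x =>
      ((cΦ.comp (continuous_const.prodMk continuous_id)).aestronglyMeasurable))
    ((cΦ.comp (continuous_const.prodMk continuous_id)).intervalIntegrable 0 T)
    ((cΦ'.comp (continuous_const.prodMk continuous_id)).aestronglyMeasurable)
    (Filter.Eventually.of_forall fun t ht x hx => by
      refine hC (x, t) ⟨?_, ?_⟩
      · have : |x| < 1 := by simpa [Real.dist_eq] using hx
        exact mem_Icc.2 (abs_le.1 this.le)
      · rw [uIoc_of_le hT.le] at ht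
        exact mem_Icc.2 ⟨ht.1.le, ht.2⟩)
    intervalIntegrable_const
    (Filter.Eventually.of_forall fun t ht x hx => hΦd x t)
  -- rewrite the action
  have hS : ∀ x : ℝ, typeIIAction n T H (fun t => q t + x • δq t) (fun t => p t + x • δp t)
      = (∑ i, (p T i + x * δp T i) * (q T i + x * δq T i)) - ∫ t in (0:ℝ)..T, Φ x t := by
    intro x
    unfold typeIIAction
    refine congrArg₂ (· - ·) (Finset.sum_congr rfl fun i _ => by simp [smul_eq_mul])
      (intervalIntegral.integral_congr fun t _ => ?_)
    have hdq : deriv (fun s => q s + x • δq s) t = deriv q t + x • deriv δq t :=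
      (((dq t).hasDerivAt).add (((dδq t).hasDerivAt).const_smul x)).deriv
    simp only [hΦdef, hdq]
    simp [smul_eq_mul]
  have hBB : HasDerivAt (fun x : ℝ => ∑ i, (p T i + x * δp T i) * (q T i + x * δq T i))
      (∑ i, (δp T i * q T i + p T i * δq T i)) 0 := by
    have h1 : HasDerivAt (fun x : ℝ => ∑ i, (p T i + x * δp T i) * (q T i + x * δq T i))
        (∑ i, (δp T i * (q T i + 0 * δq T i) + (p T i + 0 * δp T i) * δq T i)) 0 :=
      HasDerivAt.fun_sum fun i _ =>
        ((hasDerivAt_mul_const (δp T i)).const_add (p T i)).mul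
          ((hasDerivAt_mul_const (δq T i)).const_add (q T i))
    simpa using h1
  have hDS : deriv (fun ε : ℝ =>
      typeIIAction n T H (fun t => q t + ε • δq t) (fun t => p t + ε • δp t)) 0
      = (∑ i, (δp T i * q T i + p T i * δq T i)) - ∫ t in (0:ℝ)..T, Φ' 0 t := by
    have hfun : (fun ε : ℝ =>
        typeIIAction n T H (fun t => q t + ε • δq t) (fun t => p t + ε • δp t))
        = fun x => (∑ i, (p T i + x * δp T i) * (q T i + x * δq T i))
            - ∫ t in (0:ℝ)..T, Φ x t := funext hS
    rw [hfun]
    exact (hBB.sub main.2).deriv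
  -- integration by parts
  set g : ℝ → ℝ := fun t => ∑ i, p t i * δq t i with hgdef
  have hg : ∀ t, HasDerivAt g (∑ i, (δq t i * deriv p t i + p t i * deriv δq t i)) t := by
    intro t
    have h1 : HasDerivAt g (∑ i, (deriv p t i * δq t i + p t i * deriv δq t i)) t :=
      HasDerivAt.fun_sum fun i _ =>
        ((hasDerivAt_pi.1 (dp t).hasDerivAt) i).mul ((hasDerivAt_pi.1 (dδq t).hasDerivAt) i)
    have e : (∑ i, (deriv p t i * δq t i + p t i * deriv δq t i))
        = ∑ i, (δq t i * deriv p t i + p t i * deriv δq t i) :=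
      Finset.sum_congr rfl fun i _ => by ring
    exact e ▸ h1
  have cg' : Continuous fun t => ∑ i, (δq t i * deriv p t i + p t i * deriv δq t i) := by
    fun_prop
  have hFTC : ∫ t in (0:ℝ)..T, (∑ i, (δq t i * deriv p t i + p t i * deriv δq t i))
      = g T - g 0 :=
    intervalIntegral.integral_eq_sub_of_hasDerivAt (fun t _ => hg t)
      (cg'.intervalIntegrable 0 T)
  have hg0 : g 0 = 0 := by simp [hgdef, hδq0]
  set R : ℝ → ℝ := fun t =>
    (∑ i, δq t i * (fderiv ℝ (fun z : ℝ × (Fin n → ℝ) × (Fin n → ℝ) => H z.1 z.2.1 z.2.2) (t, q t, p t) ((0:ℝ), Pi.single i 1, 0) + deriv p t i))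
      + ∑ i, δp t i * (fderiv ℝ (fun z : ℝ × (Fin n → ℝ) × (Fin n → ℝ) => H z.1 z.2.1 z.2.2) (t, q t, p t) ((0:ℝ), 0, Pi.single i 1) - deriv q t i) with hRdef
  have cR : Continuous R := by
    simp only [hRdef]; fun_prop
  have hsplit : ∀ t : ℝ, (fderiv ℝ (fun z : ℝ × (Fin n → ℝ) × (Fin n → ℝ) => H z.1 z.2.1 z.2.2) (t, q t, p t)) ((0:ℝ), δq t, δp t)
      = (∑ i, δq t i * fderiv ℝ (fun z : ℝ × (Fin n → ℝ) × (Fin n → ℝ) => H z.1 z.2.1 z.2.2) (t, q t, p t) ((0:ℝ), Pi.single i 1, 0))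
        + ∑ i, δp t i * fderiv ℝ (fun z : ℝ × (Fin n → ℝ) × (Fin n → ℝ) => H z.1 z.2.1 z.2.2) (t, q t, p t) ((0:ℝ), 0, Pi.single i 1) := by
    intro t
    have e0 : (((0:ℝ), δq t, δp t) : ℝ × (Fin n → ℝ) × (Fin n → ℝ))
        = (((0:ℝ), δq t, 0) : ℝ × (Fin n → ℝ) × (Fin n → ℝ)) + ((0:ℝ), 0, δp t) := by
      simp
    rw [e0, map_add]
    refine congrArg₂ (· + ·) ?_ ?_
    · rw [← partial_q_eq n H hH t (q t) (p t) (δq t), clm_apply_eq_sum]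
      exact Finset.sum_congr rfl fun i _ => by rw [partial_q_eq n H hH]
    · rw [← partial_p_eq n H hH t (q t) (p t) (δp t), clm_apply_eq_sum]
      exact Finset.sum_congr rfl fun i _ => by rw [partial_p_eq n H hH]
  have hpt : ∀ t : ℝ, Φ' 0 t
      = (∑ i, (δq t i * deriv p t i + p t i * deriv δq t i)) - R t := by
    intro t
    simp only [hΦ'def, hRdef, zero_smul, add_zero, zero_mul, mul_zero]
    rw [hsplit t]
    simp only [mul_add, mul_sub, Finset.sum_add_distrib, Finset.sum_sub_distrib]
    ring
  have hI : ∫ t in (0:ℝ)..T, Φ' 0 t = (g T - g 0) - ∫ t in (0:ℝ)..T, R t := by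
    rw [intervalIntegral.integral_congr (fun t _ => hpt t),
      intervalIntegral.integral_sub (cg'.intervalIntegrable 0 T) (cR.intervalIntegrable 0 T),
      hFTC]
  have hstmt : ∫ t in (0:ℝ)..T, R t
      = ∫ t in (0:ℝ)..T,
          ((∑ i, δq t i *
              (fderiv ℝ (fun q' => H t q' (p t)) (q t) (Pi.single i 1) + deriv p t i))
            + ∑ i, δp t i *
              (fderiv ℝ (fun p' => H t (q t) p') (p t) (Pi.single i 1) - deriv q t i)) := by
    refine intervalIntegral.integral_congr fun t _ => ?_
    simp only [hRdef]
    refine congrArg₂ (· + ·) (Finset.sum_congr rfl fun i _ => ?_)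
      (Finset.sum_congr rfl fun i _ => ?_)
    · rw [partial_q_eq n H hH]
    · rw [partial_p_eq n H hH]
  rw [hDS, hI, hg0, ← hstmt]
  have hgT : (∑ i, (δp T i * q T i + p T i * δq T i)) = g T := by
    simp [hgdef, hδpT]
  rw [hgT]
  ring


lemma bump_pos_integral {T : ℝ} (g : ℝ → ℝ) (hg : Continuous g) {t₀ : ℝ}
    (ht₀ : t₀ ∈ Ioo (0:ℝ) T) (hgpos : 0 < g t₀) :
    ∃ φ : ℝ → ℝ, ContDiff ℝ 1 φ ∧ φ 0 = 0 ∧ φ T = 0 ∧ 0 < ∫ t in (0:ℝ)..T, φ t * g t := by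
  have hopen : IsOpen (Ioo (0:ℝ) T ∩ {t | g t₀ / 2 < g t}) :=
    isOpen_Ioo.inter (isOpen_lt continuous_const hg)
  have hmem : t₀ ∈ Ioo (0:ℝ) T ∩ {t | g t₀ / 2 < g t} := ⟨ht₀, by simp; linarith⟩
  obtain ⟨δ, hδpos, hδ⟩ := (Metric.nhds_basis_closedBall.mem_iff).1
    (hopen.mem_nhds hmem)
  set b : ContDiffBump t₀ := ⟨δ/2, δ, by linarith, by linarith⟩
  have hsub : Metric.closedBall t₀ δ ⊆ Ioo (0:ℝ) T ∩ {t | g t₀ / 2 < g t} := hδ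
  have hb0 : (b : ℝ → ℝ) 0 = 0 := by
    apply b.zero_of_le_dist
    by_contra h
    push_neg at h
    have : (0:ℝ) ∈ Metric.closedBall t₀ δ := Metric.mem_closedBall.2 h.le
    exact absurd (hsub this).1.1 (lt_irrefl 0)
  have hbT : (b : ℝ → ℝ) T = 0 := by
    apply b.zero_of_le_dist
    by_contra h
    push_neg at h
    have : T ∈ Metric.closedBall t₀ δ := Metric.mem_closedBall.2 h.le
    exact absurd (hsub this).1.2 (lt_irrefl T)
  refine ⟨b, b.contDiff, hb0, hbT, ?_⟩
  have hnonneg : ∀ t, 0 ≤ (b : ℝ → ℝ) t * g t := by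
    intro t
    rcases eq_or_ne ((b : ℝ → ℝ) t) 0 with h | h
    · simp [h]
    · have ht : t ∈ Metric.ball t₀ δ := by
        rw [← b.support_eq]; exact Function.mem_support.2 h
      have := (hsub (Metric.ball_subset_closedBall ht)).2
      have hgt : 0 < g t := lt_of_le_of_lt (by linarith) this
      exact mul_nonneg b.nonneg hgt.le
  have hint : ∀ u v : ℝ, IntervalIntegrable (fun t => (b : ℝ → ℝ) t * g t) volume u v :=
    fun u v => (b.continuous.mul hg).intervalIntegrable u v
  -- bounds for t₀ ± δ/2
  have hin : t₀ - δ/2 ∈ Metric.closedBall t₀ δ := by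
    rw [Metric.mem_closedBall, Real.dist_eq, abs_le]; constructor <;> linarith
  have hin' : t₀ + δ/2 ∈ Metric.closedBall t₀ δ := by
    rw [Metric.mem_closedBall, Real.dist_eq, abs_le]; constructor <;> linarith
  have h1 : (0:ℝ) < t₀ - δ/2 := (hsub hin).1.1
  have h2 : t₀ + δ/2 < T := (hsub hin').1.2
  have hmid : 0 < ∫ t in (t₀ - δ/2)..(t₀ + δ/2), (b : ℝ → ℝ) t * g t := by
    apply intervalIntegral_pos_of_pos_on (hint _ _)
    · intro t ht
      have htb : t ∈ Metric.closedBall t₀ (δ/2) := by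
        rw [Metric.mem_closedBall, Real.dist_eq, abs_le]
        constructor <;> [linarith [ht.1]; linarith [ht.2]]
      have hb1 : (b : ℝ → ℝ) t = 1 := b.one_of_mem_closedBall htb
      have : t ∈ Metric.closedBall t₀ δ :=
        Metric.closedBall_subset_closedBall (by linarith) htb
      have hgt : g t₀ / 2 < g t := (hsub this).2
      rw [hb1, one_mul]; linarith
    · linarith
  have e1 : (∫ t in (0:ℝ)..(t₀ - δ/2), (b : ℝ → ℝ) t * g t)
      + ∫ t in (t₀ - δ/2)..T, (b : ℝ → ℝ) t * g t
      = ∫ t in (0:ℝ)..T, (b : ℝ → ℝ) t * g t :=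
    integral_add_adjacent_intervals (hint _ _) (hint _ _)
  have e2 : (∫ t in (t₀ - δ/2)..(t₀ + δ/2), (b : ℝ → ℝ) t * g t)
      + ∫ t in (t₀ + δ/2)..T, (b : ℝ → ℝ) t * g t
      = ∫ t in (t₀ - δ/2)..T, (b : ℝ → ℝ) t * g t :=
    integral_add_adjacent_intervals (hint _ _) (hint _ _)
  have n1 : 0 ≤ ∫ t in (0:ℝ)..(t₀ - δ/2), (b : ℝ → ℝ) t * g t :=
    integral_nonneg (by linarith) (fun t _ => hnonneg t)
  have n2 : 0 ≤ ∫ t in (t₀ + δ/2)..T, (b : ℝ → ℝ) t * g t :=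
    integral_nonneg (by linarith) (fun t _ => hnonneg t)
  linarith

lemma vanish_of_integral_eq_zero {T : ℝ} (g : ℝ → ℝ) (hg : Continuous g)
    (h : ∀ φ : ℝ → ℝ, ContDiff ℝ 1 φ → φ 0 = 0 → φ T = 0 →
      (∫ t in (0:ℝ)..T, φ t * g t) = 0) :
    ∀ t ∈ Ioo (0:ℝ) T, g t = 0 := by
  intro t₀ ht₀
  by_contra h0
  rcases lt_or_gt_of_ne h0 with hlt | hgt
  · obtain ⟨φ, hφ, h1, h2, hpos⟩ := bump_pos_integral (fun t => -g t) (hg.neg) ht₀ (by show 0 < -g t₀; linarith)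
    have := h φ hφ h1 h2
    rw [show (∫ t in (0:ℝ)..T, φ t * -g t) = -∫ t in (0:ℝ)..T, φ t * g t by
      rw [← intervalIntegral.integral_neg]; simp [mul_neg]] at hpos
    linarith
  · obtain ⟨φ, hφ, h1, h2, hpos⟩ := bump_pos_integral g hg ht₀ hgt
    rw [h φ hφ h1 h2] at hpos
    exact lt_irrefl _ hpos

/-- Type II variational principle on a vector space, Leok–Zhang.
A C¹ curve `(q,p)` with `q(0) = q₀`, `p(T) = p₁` makes the Type II action stationary with
respect to all C¹ variations `(δq, δp)` with `δq(0) = 0`, `δp(T) = 0` if and only if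
Hamilton's equations `q̇ = D_p H`, `ṗ = −D_q H` hold on `(0,T)`. -/
theorem typeII_variational_principle
    (n : ℕ) (T : ℝ) (hT : 0 < T)
    (H : ℝ → (Fin n → ℝ) → (Fin n → ℝ) → ℝ)
    (hH : ContDiff ℝ 1 (fun x : ℝ × (Fin n → ℝ) × (Fin n → ℝ) => H x.1 x.2.1 x.2.2))
    (q p : ℝ → (Fin n → ℝ)) (hq : ContDiff ℝ 1 q) (hp : ContDiff ℝ 1 p)
    (q₀ p₁ : Fin n → ℝ) (hq0 : q 0 = q₀) (hpT : p T = p₁) :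
    (∀ δq δp : ℝ → (Fin n → ℝ), ContDiff ℝ 1 δq → ContDiff ℝ 1 δp →
        δq 0 = 0 → δp T = 0 →
        deriv (fun ε : ℝ =>
          typeIIAction n T H (fun t => q t + ε • δq t) (fun t => p t + ε • δp t)) 0 = 0)
    ↔ (∀ t ∈ Ioo (0 : ℝ) T,
        deriv q t = (fun i => fderiv ℝ (fun p' => H t (q t) p') (p t) (Pi.single i 1)) ∧
        deriv p t = (fun i => -fderiv ℝ (fun q' => H t q' (p t)) (q t) (Pi.single i 1))) := by
  have cDH : Continuous (fderiv ℝ (fun z : ℝ × (Fin n → ℝ) × (Fin n → ℝ) => H z.1 z.2.1 z.2.2)) := hH.continuous_fderiv one_ne_zero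
  have cq := hq.continuous
  have cp := hp.continuous
  have cq' := hq.continuous_deriv le_rfl
  have cp' := hp.continuous_deriv le_rfl
  constructor
  · intro stat t₀ ht₀
    constructor
    · funext i
      have hgap : ∀ t ∈ Ioo (0:ℝ) T,
          (fun t => fderiv ℝ (fun p' => H t (q t) p') (p t) (Pi.single i 1) - deriv q t i) t
            = 0 := by
        apply vanish_of_integral_eq_zero
        · have e : (fun t => fderiv ℝ (fun p' => H t (q t) p') (p t) (Pi.single i 1)
              - deriv q t i)
              = fun t => (fderiv ℝ (fun z : ℝ × (Fin n → ℝ) × (Fin n → ℝ) => H z.1 z.2.1 z.2.2) (t, q t, p t)) ((0:ℝ), 0, Pi.single i 1) - deriv q t i := by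
            funext t; rw [partial_p_eq n H hH]
          rw [e]; fun_prop
        · intro φ hφ hφ0 hφT
          have hδp : ContDiff ℝ 1 (fun t => φ t • Pi.single (M := fun _ : Fin n => ℝ) i 1) :=
            hφ.smul contDiff_const
          have hδpT : (fun t => φ t • Pi.single (M := fun _ : Fin n => ℝ) i 1) T = 0 := by
            simp [hφT]
          have hst := stat (fun _ => (0 : Fin n → ℝ)) _ contDiff_const hδp rfl hδpT
          rw [key_deriv n T hT H hH q p hq hp _ _ contDiff_const hδp rfl hδpT] at hst
          refine Eq.trans ?_ hst
          refine intervalIntegral.integral_congr fun t _ => ?_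
          simp [Pi.single_apply, mul_ite, ite_mul, Finset.sum_ite_eq']
      have := hgap t₀ ht₀
      simp only [sub_eq_zero] at this
      exact this.symm
    · funext i
      have hgap : ∀ t ∈ Ioo (0:ℝ) T,
          (fun t => fderiv ℝ (fun q' => H t q' (p t)) (q t) (Pi.single i 1) + deriv p t i) t
            = 0 := by
        apply vanish_of_integral_eq_zero
        · have e : (fun t => fderiv ℝ (fun q' => H t q' (p t)) (q t) (Pi.single i 1)
              + deriv p t i)
              = fun t => (fderiv ℝ (fun z : ℝ × (Fin n → ℝ) × (Fin n → ℝ) => H z.1 z.2.1 z.2.2) (t, q t, p t)) ((0:ℝ), Pi.single i 1, 0) + deriv p t i := by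
            funext t; rw [partial_q_eq n H hH]
          rw [e]; fun_prop
        · intro φ hφ hφ0 hφT
          have hδq : ContDiff ℝ 1 (fun t => φ t • Pi.single (M := fun _ : Fin n => ℝ) i 1) :=
            hφ.smul contDiff_const
          have hδq0 : (fun t => φ t • Pi.single (M := fun _ : Fin n => ℝ) i 1) 0 = 0 := by
            simp [hφ0]
          have hst := stat _ (fun _ => (0 : Fin n → ℝ)) hδq contDiff_const hδq0 rfl
          rw [key_deriv n T hT H hH q p hq hp _ _ hδq contDiff_const hδq0 rfl] at hst
          refine Eq.trans ?_ hst
          refine intervalIntegral.integral_congr fun t _ => ?_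
          simp [Pi.single_apply, mul_ite, ite_mul, Finset.sum_ite_eq']
      have := hgap t₀ ht₀
      simp only [] at this
      show deriv p t₀ i = -fderiv ℝ (fun q' => H t₀ q' (p t₀)) (q t₀) (Pi.single i 1)
      linarith
  · intro ham δq δp hδq hδp h0 hTT
    rw [key_deriv n T hT H hH q p hq hp δq δp hδq hδp h0 hTT]
    have hae : ∀ᵐ t : ℝ, t ∈ Set.uIoc (0:ℝ) T →
        ((∑ i, δq t i *
            (fderiv ℝ (fun q' => H t q' (p t)) (q t) (Pi.single i 1) + deriv p t i))
          + ∑ i, δp t i *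
            (fderiv ℝ (fun p' => H t (q t) p') (p t) (Pi.single i 1) - deriv q t i)) = 0 := by
      rw [MeasureTheory.ae_iff]
      refine measure_mono_null (fun t ht => ?_) (Real.volume_singleton (a := T))
      simp only [mem_setOf_eq, not_forall] at ht
      obtain ⟨ht1, ht2⟩ := ht
      rw [uIoc_of_le hT.le] at ht1
      rcases eq_or_lt_of_le ht1.2 with h | h
      · exact mem_singleton_iff.2 h
      · exfalso
        apply ht2
        obtain ⟨e1, e2⟩ := ham t ⟨ht1.1, h⟩
        rw [Finset.sum_eq_zero (fun i _ => by simp only [congrFun e2 i]; ring),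
          Finset.sum_eq_zero (fun i _ => by simp only [congrFun e1 i]; ring), add_zero]
    rw [intervalIntegral.integral_congr_ae hae]
    simp
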